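/- Let α₀ > 0, Re > 0 and K > 0 be constants and let T > 0. Suppose H₁ : [0,T] → ℝ is differentiable and strictly positive, and H₂ : [0,T] → ℝ is continuous and nonnegative, satisfying (1/2)·H₁'(t) ≤ α₀·H₁(t) − (1/2)·Re⁻¹·H₂(t) + K·H₁(t)³ for all t ∈ [0,T]. Then ⟨H₂^{1/3}⟩_T ≤ [ 2·Re·( α₀·⟨1/H₁⟩_T + K·⟨H₁⟩_T ) + (Re/T)·( 1/H₁(T) − 1/H₁(0) ) ]^{1/3} · ( ⟨H₁⟩_T )^{2/3}. -/

import Mathlib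

open MeasureTheory Set intervalIntegral
open scoped ENNReal

/-- Conditional form of the 3d estimate for
`⟨Q₂,₁⟩_T = ⟨H₂^{1/3}⟩_T`: if `(1/2)·H₁' ≤ α₀·H₁ − (1/2)·Re⁻¹·H₂ + K·H₁³`
on `[0,T]`, then
`⟨H₂^{1/3}⟩_T ≤ [2Re(α₀⟨1/H₁⟩_T + K⟨H₁⟩_T) + (Re/T)(1/H₁(T) − 1/H₁(0))]^{1/3}
  · ⟨H₁⟩_T^{2/3}`. -/
theorem toner_tu_3d_Q21_estimate (α₀ Re K T : ℝ)
    (hα : 0 < α₀) (hRe : 0 < Re) (hK : 0 < K) (hT : 0 < T)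
    (H₁ H₁' H₂ : ℝ → ℝ)
    (hd1 : ∀ t ∈ Set.Icc (0:ℝ) T, HasDerivAt H₁ (H₁' t) t)
    (hH₁pos : ∀ t ∈ Set.Icc (0:ℝ) T, 0 < H₁ t)
    (hH₂c : ContinuousOn H₂ (Set.Icc (0:ℝ) T))
    (hH₂nn : ∀ t ∈ Set.Icc (0:ℝ) T, 0 ≤ H₂ t)
    (hineq : ∀ t ∈ Set.Icc (0:ℝ) T,
      (1/2) * H₁' t ≤ α₀ * H₁ t - (1/2) * Re⁻¹ * H₂ t + K * (H₁ t)^3) :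
    (1/T) * ∫ τ in (0:ℝ)..T, (H₂ τ) ^ ((1:ℝ)/3) ≤
      (2 * Re * (α₀ * ((1/T) * ∫ τ in (0:ℝ)..T, 1 / H₁ τ) +
          K * ((1/T) * ∫ τ in (0:ℝ)..T, H₁ τ)) +
        (Re/T) * (1 / H₁ T - 1 / H₁ 0)) ^ ((1:ℝ)/3) *
      ((1/T) * ∫ τ in (0:ℝ)..T, H₁ τ) ^ ((2:ℝ)/3) := by
  have hT0 : (0:ℝ) ≤ T := hT.le
  have huIcc : uIcc (0:ℝ) T = Icc 0 T := uIcc_of_le hT0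
  have hH₁c : ContinuousOn H₁ (Icc 0 T) := fun t ht =>
    (hd1 t ht).continuousAt.continuousWithinAt
  set g : ℝ → ℝ := fun τ => H₂ τ / (H₁ τ)^2 with hgdef
  set ψ : ℝ → ℝ := fun τ => 2*Re*(α₀ * (1 / H₁ τ) + K * H₁ τ) with hψdef
  have hgc : ContinuousOn g (Icc 0 T) :=
    hH₂c.div (hH₁c.pow 2) (fun t ht => pow_ne_zero 2 (hH₁pos t ht).ne')
  have hgnn : ∀ t ∈ Icc (0:ℝ) T, 0 ≤ g t := fun t ht =>
    div_nonneg (hH₂nn t ht) (by positivity)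
  have hinvc : ContinuousOn (fun τ => 1 / H₁ τ) (Icc 0 T) :=
    continuousOn_const.div hH₁c (fun t ht => (hH₁pos t ht).ne')
  have hψc : ContinuousOn ψ (Icc 0 T) :=
    continuousOn_const.mul ((continuousOn_const.mul hinvc).add (continuousOn_const.mul hH₁c))
  have hgI : IntervalIntegrable g volume 0 T :=
    (hgc.mono huIcc.subset).intervalIntegrable
  have hψI : IntervalIntegrable ψ volume 0 T :=
    (hψc.mono huIcc.subset).intervalIntegrable
  have hinvI : IntervalIntegrable (fun τ => 1 / H₁ τ) volume 0 T :=
    (hinvc.mono huIcc.subset).intervalIntegrable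
  have hH₁I : IntervalIntegrable H₁ volume 0 T :=
    ((hH₁c.mono huIcc.subset)).intervalIntegrable
  set θ : ℝ → ℝ := fun τ => (ψ τ - g τ) / Re with hθdef
  have hθc : ContinuousOn θ (Icc 0 T) := (hψc.sub hgc).div_const Re
  have hθI : IntervalIntegrable θ volume 0 T :=
    (hθc.mono huIcc.subset).intervalIntegrable
  -- pointwise: derivative of -1/H₁ bounded by θ
  have hptwise : ∀ t ∈ Icc (0:ℝ) T, H₁' t / (H₁ t)^2 ≤ θ t := by
    intro t ht
    have h1 := hineq t ht
    have hpos := hH₁pos t ht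
    have hpos2 : (0:ℝ) < (H₁ t)^2 := by positivity
    have h1' : Re * H₁' t ≤ 2*Re*(α₀*H₁ t) + 2*Re*(K*H₁ t^3) - H₂ t := by
      calc Re * H₁' t = 2*Re*(1/2*H₁' t) := by ring
        _ ≤ 2*Re*(α₀ * H₁ t - 1/2 * Re⁻¹ * H₂ t + K * (H₁ t)^3) :=
            mul_le_mul_of_nonneg_left h1 (by positivity)
        _ = 2*Re*(α₀*H₁ t) + 2*Re*(K*H₁ t^3) - (Re*Re⁻¹)*H₂ t := by ring
        _ = _ := by rw [mul_inv_cancel₀ hRe.ne']; ring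
    have key : (ψ t - g t) * H₁ t ^ 2 = 2*Re*(α₀*H₁ t) + 2*Re*(K*H₁ t^3) - H₂ t := by
      simp only [hψdef, hgdef]
      field_simp
    rw [hθdef, div_le_div_iff₀ hpos2 hRe]
    linarith [key, h1']
  -- Step A: ∫ g ≤ ∫ ψ + Re * (1/H₁ T - 1/H₁ 0)
  have stepA : (∫ τ in (0:ℝ)..T, g τ) ≤ (∫ τ in (0:ℝ)..T, ψ τ) + Re * (1 / H₁ T - 1 / H₁ 0) := by
    set Φ : ℝ → ℝ := fun t => -(H₁ t)⁻¹ - ∫ τ in (0:ℝ)..t, θ τ with hΦdef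
    have hintOn : IntegrableOn θ (uIcc (0:ℝ) T) volume := by
      rw [huIcc]; exact hθc.integrableOn_compact isCompact_Icc
    have hprimc : ContinuousOn (fun t => ∫ τ in (0:ℝ)..t, θ τ) (Icc 0 T) := by
      have := intervalIntegral.continuousOn_primitive_interval (a := 0) (b := T) hintOn
      rwa [huIcc] at this
    have hΦc : ContinuousOn Φ (Icc 0 T) :=
      ((hH₁c.inv₀ fun t ht => (hH₁pos t ht).ne').neg).sub hprimc
    have hΦderiv : ∀ t ∈ Ioo (0:ℝ) T, HasDerivAt Φ (H₁' t / H₁ t ^ 2 - θ t) t := by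
      intro t ht
      have htIcc : t ∈ Icc (0:ℝ) T := Ioo_subset_Icc_self ht
      have h1 : HasDerivAt (fun s => -(H₁ s)⁻¹) (H₁' t / H₁ t ^ 2) t := by
        have := ((hd1 t htIcc).inv (hH₁pos t htIcc).ne').neg
        exact this.congr_deriv (by ring)
      have hsub : uIcc (0:ℝ) t ⊆ uIcc (0:ℝ) T := by
        rw [huIcc, uIcc_of_le ht.1.le]; exact Icc_subset_Icc le_rfl ht.2.le
      have h2 : HasDerivAt (fun u => ∫ τ in (0:ℝ)..u, θ τ) (θ t) t :=
        intervalIntegral.integral_hasDerivAt_right (hθI.mono_set hsub)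
          (ContinuousAt.stronglyMeasurableAtFilter isOpen_Ioo
            (fun x hx => hθc.continuousAt (Icc_mem_nhds hx.1 hx.2)) t ht)
          (hθc.continuousAt (Icc_mem_nhds ht.1 ht.2))
      exact h1.sub h2
    have hanti : AntitoneOn Φ (Icc 0 T) := by
      refine antitoneOn_of_deriv_nonpos (convex_Icc 0 T) hΦc ?_ ?_
      · intro t ht
        rw [interior_Icc] at ht
        exact ((hΦderiv t ht).differentiableAt).differentiableWithinAt
      · intro t ht
        rw [interior_Icc] at ht
        rw [(hΦderiv t ht).deriv]
        have := hptwise t (Ioo_subset_Icc_self ht)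
        linarith
    have hΦTle : Φ T ≤ Φ 0 := hanti (left_mem_Icc.2 hT0) (right_mem_Icc.2 hT0) hT0
    have hΦ0 : Φ 0 = -(H₁ 0)⁻¹ := by simp [hΦdef]
    have hIθ : (∫ τ in (0:ℝ)..T, θ τ)
        = ((∫ τ in (0:ℝ)..T, ψ τ) - (∫ τ in (0:ℝ)..T, g τ)) / Re := by
      simp only [hθdef, div_eq_mul_inv]
      rw [intervalIntegral.integral_mul_const, intervalIntegral.integral_sub hψI hgI]
    have : -(H₁ T)⁻¹ - ((∫ τ in (0:ℝ)..T, ψ τ) - (∫ τ in (0:ℝ)..T, g τ)) / Re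
        ≤ -(H₁ 0)⁻¹ := by
      rw [hΦ0] at hΦTle
      rw [← hIθ]
      exact hΦTle
    have key2 : (H₁ 0)⁻¹ - (H₁ T)⁻¹
        ≤ ((∫ τ in (0:ℝ)..T, ψ τ) - (∫ τ in (0:ℝ)..T, g τ)) / Re := by linarith [this]
    have this2 := mul_le_mul_of_nonneg_right key2 hRe.le
    rw [div_mul_cancel₀ _ hRe.ne'] at this2
    simp only [one_div]
    nlinarith [this2]
  -- Step B: Hölder
  have hA : (0:ℝ) ≤ ∫ τ in (0:ℝ)..T, g τ := intervalIntegral.integral_nonneg hT0 hgnn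
  have hB : (0:ℝ) ≤ ∫ τ in (0:ℝ)..T, H₁ τ :=
    intervalIntegral.integral_nonneg hT0 (fun u hu => (hH₁pos u hu).le)
  have stepB : (∫ τ in (0:ℝ)..T, (H₂ τ) ^ ((1:ℝ)/3))
      ≤ (∫ τ in (0:ℝ)..T, g τ) ^ ((1:ℝ)/3) * (∫ τ in (0:ℝ)..T, H₁ τ) ^ ((2:ℝ)/3) := by
    set μ : Measure ℝ := volume.restrict (Ioc 0 T) with hμdef
    haveI : IsFiniteMeasure μ := by
      constructor
      rw [hμdef, Measure.restrict_apply_univ, Real.volume_Ioc]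
      exact ENNReal.ofReal_lt_top
    have hIocIcc : Ioc (0:ℝ) T ⊆ Icc 0 T := Ioc_subset_Icc_self
    set f₁ : ℝ → ℝ := fun τ => (g τ) ^ ((1:ℝ)/3) with hf₁def
    set f₂ : ℝ → ℝ := fun τ => (H₁ τ) ^ ((2:ℝ)/3) with hf₂def
    have hf₁c : ContinuousOn f₁ (Icc 0 T) :=
      hgc.rpow_const (fun x hx => Or.inr (by norm_num))
    have hf₂c : ContinuousOn f₂ (Icc 0 T) :=
      hH₁c.rpow_const (fun x hx => Or.inr (by norm_num))
    have memLp : ∀ (f : ℝ → ℝ), ContinuousOn f (Icc 0 T) → ∀ p : ℝ≥0∞, MemLp f p μ := by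
      intro f hf p
      obtain ⟨C, hC⟩ := isCompact_Icc.exists_bound_of_continuousOn hf
      refine MemLp.of_bound ((hf.mono hIocIcc).aestronglyMeasurable measurableSet_Ioc) C ?_
      rw [hμdef]
      exact (ae_restrict_iff' measurableSet_Ioc).2 (ae_of_all _ fun x hx => hC x (hIocIcc hx))
    have hpq : Real.HolderConjugate 3 (3/2) := (Real.holderConjugate_iff_eq_conjExponent (by norm_num)).2 (by norm_num)
    have hf₁nn : 0 ≤ᵐ[μ] f₁ := by
      rw [hμdef]
      exact (ae_restrict_iff' measurableSet_Ioc).2 (ae_of_all _ fun x hx =>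
        Real.rpow_nonneg (hgnn x (hIocIcc hx)) _)
    have hf₂nn : 0 ≤ᵐ[μ] f₂ := by
      rw [hμdef]
      exact (ae_restrict_iff' measurableSet_Ioc).2 (ae_of_all _ fun x hx =>
        Real.rpow_nonneg (hH₁pos x (hIocIcc hx)).le _)
    have holder := MeasureTheory.integral_mul_le_Lp_mul_Lq_of_nonneg hpq hf₁nn hf₂nn
      (memLp f₁ hf₁c _) (memLp f₂ hf₂c _)
    have e₁ : ∫ a, f₁ a * f₂ a ∂μ = ∫ τ in (0:ℝ)..T, (H₂ τ) ^ ((1:ℝ)/3) := by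
      rw [intervalIntegral.integral_of_le hT0]
      refine setIntegral_congr_fun measurableSet_Ioc (fun x hx => ?_)
      have hx' := hIocIcc hx
      have h1 : (0:ℝ) < H₁ x := hH₁pos x hx'
      have h2 : (0:ℝ) ≤ H₂ x := hH₂nn x hx'
      simp only [hf₁def, hf₂def, hgdef]
      have hpow : (H₁ x) ^ ((2:ℝ)/3) = ((H₁ x)^2) ^ ((1:ℝ)/3) := by
        rw [← Real.rpow_natCast (H₁ x) 2, ← Real.rpow_mul h1.le]
        norm_num
      rw [hpow, ← Real.mul_rpow (div_nonneg h2 (by positivity)) (by positivity),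
        div_mul_cancel₀ _ (pow_ne_zero 2 h1.ne')]
    have e₂ : ∫ a, f₁ a ^ (3:ℝ) ∂μ = ∫ τ in (0:ℝ)..T, g τ := by
      rw [intervalIntegral.integral_of_le hT0]
      refine setIntegral_congr_fun measurableSet_Ioc (fun x hx => ?_)
      simp only [hf₁def]
      rw [← Real.rpow_mul (hgnn x (hIocIcc hx))]
      norm_num
    have e₃ : ∫ a, f₂ a ^ ((3:ℝ)/2) ∂μ = ∫ τ in (0:ℝ)..T, H₁ τ := by
      rw [intervalIntegral.integral_of_le hT0]
      refine setIntegral_congr_fun measurableSet_Ioc (fun x hx => ?_)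
      simp only [hf₂def]
      rw [← Real.rpow_mul (hH₁pos x (hIocIcc hx)).le]
      norm_num
    rw [e₁, e₂, e₃] at holder
    convert holder using 3 <;> norm_num
  -- final assembly
  have hψint : (∫ τ in (0:ℝ)..T, ψ τ)
      = 2*Re*(α₀*(∫ τ in (0:ℝ)..T, 1 / H₁ τ) + K*(∫ τ in (0:ℝ)..T, H₁ τ)) := by
    simp only [hψdef]
    rw [intervalIntegral.integral_const_mul]
    congr 1
    rw [intervalIntegral.integral_add (hinvI.const_mul α₀) (hH₁I.const_mul K),
      intervalIntegral.integral_const_mul, intervalIntegral.integral_const_mul]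
  set Abase : ℝ := 2 * Re * (α₀ * ((1/T) * ∫ τ in (0:ℝ)..T, 1 / H₁ τ) +
      K * ((1/T) * ∫ τ in (0:ℝ)..T, H₁ τ)) + (Re/T) * (1 / H₁ T - 1 / H₁ 0) with hAbase
  have hbound : (1/T) * (∫ τ in (0:ℝ)..T, g τ) ≤ Abase := by
    have := mul_le_mul_of_nonneg_left stepA (le_of_lt (show (0:ℝ) < 1/T by positivity))
    calc (1/T) * (∫ τ in (0:ℝ)..T, g τ)
        ≤ (1/T) * ((∫ τ in (0:ℝ)..T, ψ τ) + Re * (1 / H₁ T - 1 / H₁ 0)) := this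
      _ = Abase := by rw [hψint, hAbase]; ring
  have hTA : (0:ℝ) ≤ (1/T) * (∫ τ in (0:ℝ)..T, g τ) := by positivity
  calc (1/T) * ∫ τ in (0:ℝ)..T, (H₂ τ) ^ ((1:ℝ)/3)
      ≤ (1/T) * ((∫ τ in (0:ℝ)..T, g τ) ^ ((1:ℝ)/3) * (∫ τ in (0:ℝ)..T, H₁ τ) ^ ((2:ℝ)/3)) :=
        mul_le_mul_of_nonneg_left stepB (by positivity)
    _ = ((1/T) * ∫ τ in (0:ℝ)..T, g τ) ^ ((1:ℝ)/3) *
        ((1/T) * ∫ τ in (0:ℝ)..T, H₁ τ) ^ ((2:ℝ)/3) := by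
        rw [Real.mul_rpow (by positivity) hA, Real.mul_rpow (by positivity) hB]
        have hfrac : ((1:ℝ)/T) ^ ((1:ℝ)/3) * (1/T) ^ ((2:ℝ)/3) = 1/T := by
          rw [← Real.rpow_add (by positivity)]
          norm_num
        calc (1/T) * ((∫ τ in (0:ℝ)..T, g τ) ^ ((1:ℝ)/3) * (∫ τ in (0:ℝ)..T, H₁ τ) ^ ((2:ℝ)/3))
            = ((1/T) ^ ((1:ℝ)/3) * (1/T) ^ ((2:ℝ)/3)) *
              ((∫ τ in (0:ℝ)..T, g τ) ^ ((1:ℝ)/3) * (∫ τ in (0:ℝ)..T, H₁ τ) ^ ((2:ℝ)/3)) := by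
              rw [hfrac]
          _ = _ := by ring
    _ ≤ Abase ^ ((1:ℝ)/3) * ((1/T) * ∫ τ in (0:ℝ)..T, H₁ τ) ^ ((2:ℝ)/3) :=
        mul_le_mul_of_nonneg_right (Real.rpow_le_rpow hTA hbound (by norm_num))
          (Real.rpow_nonneg (by positivity) _)
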